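/- Suppose all n insurers use Value-at-Risk at levels αᵢ ∈ (0,1] and the premium principle π is consistent with the usual stochastic order and 1-Lipschitz w.r.t. the supremum norm. Then the function Q(a₁,…,aₙ) = Σᵢ aᵢ + π(Σᵢ min{(Xᵢ - aᵢ)₊, VaR_{αᵢ}(Xᵢ) - aᵢ}) is componentwise increasing on ∏ᵢ [0, VaR_{αᵢ}(Xᵢ)]; hence (a₁,…,aₙ) = (0,…,0) minimizes Q, and the treaties fᵢ(x) = min{x, VaR_{αᵢ}(Xᵢ)} are socially optimal. -/

import Mathlib

open MeasureTheory ProbabilityTheory Set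

noncomputable section

variable {Ω Ω' : Type*} [MeasurableSpace Ω] [MeasurableSpace Ω']

/-- Distribution function of a random variable. -/
def distFun (μ : Measure Ω) (X : Ω → ℝ) (x : ℝ) : ℝ := (μ {ω | X ω ≤ x}).toReal

/-- Value-at-Risk at level α: `VaR_α(X) = inf {x | F_X(x) ≥ 1-α}`. -/
def VaR (μ : Measure Ω) (X : Ω → ℝ) (α : ℝ) : ℝ := sInf {x | 1 - α ≤ distFun μ X x}

/-- Range-Value-at-Risk with parameters α, β (for β > 0). -/
def RVaR (μ : Measure Ω) (X : Ω → ℝ) (α β : ℝ) : ℝ := (1/β) * ∫ s in α..(α+β), VaR μ X s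

/-- Usual stochastic order. -/
def le_st (μ : Measure Ω) (X : Ω → ℝ) (ν : Measure Ω') (Y : Ω' → ℝ) : Prop :=
  ∀ f : ℝ → ℝ, Monotone f → Integrable (fun ω => f (X ω)) μ →
    Integrable (fun ω => f (Y ω)) ν → ∫ ω, f (X ω) ∂μ ≤ ∫ ω, f (Y ω) ∂ν

/-- Convex order. -/
def le_cx (μ : Measure Ω) (X : Ω → ℝ) (ν : Measure Ω') (Y : Ω' → ℝ) : Prop :=
  ∀ f : ℝ → ℝ, ConvexOn ℝ univ f → Integrable (fun ω => f (X ω)) μ →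
    Integrable (fun ω => f (Y ω)) ν → ∫ ω, f (X ω) ∂μ ≤ ∫ ω, f (Y ω) ∂ν

/-- Increasing convex order. -/
def le_icx (μ : Measure Ω) (X : Ω → ℝ) (ν : Measure Ω') (Y : Ω' → ℝ) : Prop :=
  ∀ f : ℝ → ℝ, Monotone f → ConvexOn ℝ univ f → Integrable (fun ω => f (X ω)) μ →
    Integrable (fun ω => f (Y ω)) ν → ∫ ω, f (X ω) ∂μ ≤ ∫ ω, f (Y ω) ∂ν

/-- Admissible ceded loss functions: `0 ≤ f(x) ≤ x` with both `f` and the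
retained loss `x - f(x)` increasing. -/
def Ceded (f : ℝ → ℝ) : Prop :=
  Monotone f ∧ Monotone (fun x => x - f x) ∧ ∀ x, 0 ≤ x → 0 ≤ f x ∧ f x ≤ x

/-- Layer reinsurance treaty with deductible `a` and upper bound `b`. -/
def layer (a b x : ℝ) : ℝ := min (max (x - a) 0) b

/-- Joint distribution function of a random vector. -/
def jointCDF {n : ℕ} (μ : Measure Ω) (X : Fin n → Ω → ℝ) (x : Fin n → ℝ) : ℝ :=
  (μ {ω | ∀ i, X i ω ≤ x i}).toReal

/-- All one-dimensional marginals are uniform on [0,1]. -/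
def uniformMarginals {n : ℕ} (ν : Measure (Fin n → ℝ)) : Prop :=
  ∀ i, Measure.map (fun u => u i) ν = volume.restrict (Icc (0:ℝ) 1)

/-- `C` is (the distribution function of) an `n`-dimensional copula. -/
def IsCopula {n : ℕ} (C : (Fin n → ℝ) → ℝ) : Prop :=
  ∃ ν : Measure (Fin n → ℝ), IsProbabilityMeasure ν ∧ uniformMarginals ν ∧
    ∀ x, C x = (ν {u | ∀ i, u i ≤ x i}).toReal

/-- `C` is a copula of the random vector `X`. -/
def HasCopula {n : ℕ} (μ : Measure Ω) (X : Fin n → Ω → ℝ) (C : (Fin n → ℝ) → ℝ) : Prop :=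
  IsCopula C ∧ ∀ x : Fin n → ℝ, jointCDF μ X x = C (fun i => distFun μ (X i) (x i))

/-- Positively dependent through the stochastic ordering: for each `i`,
`E[f(X_{-i}) | X_i = x]` is increasing in `x` for every componentwise increasing `f`
(not depending on coordinate `i`). -/
def PDS {n : ℕ} (μ : Measure Ω) (X : Fin n → Ω → ℝ) : Prop :=
  ∀ i : Fin n, ∀ f : (Fin n → ℝ) → ℝ, Monotone f →
    (∀ a b : Fin n → ℝ, (∀ j, j ≠ i → a j = b j) → f a = f b) →
    ∃ g : ℝ → ℝ, Monotone g ∧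
      (μ[(fun ω => f (fun j => X j ω)) | MeasurableSpace.comap (X i) (borel ℝ)]
        =ᵐ[μ] fun ω => g (X i ω))

/-- `C` is a PDS copula. -/
def IsPDSCopula {n : ℕ} (C : (Fin n → ℝ) → ℝ) : Prop :=
  ∃ ν : Measure (Fin n → ℝ), IsProbabilityMeasure ν ∧ uniformMarginals ν ∧
    (∀ x, C x = (ν {u | ∀ i, u i ≤ x i}).toReal) ∧ PDS ν (fun i u => u i)

/-- Positive orthant dependence. -/
def POD {n : ℕ} (μ : Measure Ω) (X : Fin n → Ω → ℝ) : Prop :=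
  ∀ x : Fin n → ℝ,
    (∏ i, (μ {ω | X i ω ≤ x i}).toReal) ≤ (μ {ω | ∀ i, X i ω ≤ x i}).toReal ∧
    (∏ i, (μ {ω | x i < X i ω}).toReal) ≤ (μ {ω | ∀ i, x i < X i ω}).toReal

/-- A comonotone random vector. -/
def Comonotone {m : ℕ} (Z : Fin m → Ω → ℝ) : Prop :=
  ∀ i j ω ω', 0 ≤ (Z i ω - Z i ω') * (Z j ω - Z j ω')

/-- The finite-dimensional objective of the VaR problem. -/
def Qobj {n : ℕ} (μ : Measure Ω) (X : Fin n → Ω → ℝ) (α : Fin n → ℝ)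
    (π : (Ω → ℝ) → ℝ) (a : Fin n → ℝ) : ℝ :=
  (∑ i, a i) + π (fun ω => ∑ i, layer (a i) (VaR μ (X i) (α i) - a i) (X i ω))

section AuxLemmas
open Filter Topology

lemma VaR_one (μ : Measure Ω) (Y : Ω → ℝ) : VaR μ Y 1 = 0 := by
  have h : {x : ℝ | 1 - 1 ≤ distFun μ Y x} = univ :=
    eq_univ_of_forall fun x => by simp [distFun, ENNReal.toReal_nonneg]
  rw [VaR, h, Real.sInf_of_not_bddBelow]
  rintro ⟨c, hc⟩
  have := hc (mem_univ (c - 1))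
  linarith

lemma VaR_comp {μ : Measure Ω} [IsProbabilityMeasure μ] {X : Ω → ℝ} (hXm : Measurable X)
    (hX0 : ∀ ω, 0 ≤ X ω) {r : ℝ → ℝ} (hrm : Monotone r) (hrc : Continuous r) (hr0 : r 0 = 0)
    {α : ℝ} (hα : α ∈ Ioc (0:ℝ) 1) :
    VaR μ (fun ω => r (X ω)) α = r (VaR μ X α) := by
  have hr0' : ∀ ω, 0 ≤ r (X ω) := fun ω => hr0 ▸ hrm (hX0 ω)
  rcases eq_or_lt_of_le hα.2 with h1 | h1
  · subst h1; rw [VaR_one, VaR_one, hr0]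
  · have hαpos := hα.1
    rw [VaR, VaR]
    set S := {x : ℝ | 1 - α ≤ distFun μ X x} with hS
    have hup : ∀ {x y : ℝ}, x ∈ S → x ≤ y → y ∈ S := fun hx hxy =>
      le_trans hx (ENNReal.toReal_mono (measure_ne_top μ _)
        (measure_mono fun ω hω => le_trans hω hxy))
    have hsub : ∀ Y : Ω → ℝ, (∀ ω, 0 ≤ Y ω) → ∀ x : ℝ, x < 0 → ¬ (1 - α ≤ distFun μ Y x) := by
      intro Y hY x hx h
      have he : {ω | Y ω ≤ x} = ∅ :=
        eq_empty_iff_forall_notMem.2 fun ω hω => by have := hY ω; simp only [mem_setOf] at hω; linarith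
      rw [distFun, he] at h
      simp at h
      linarith
    have hbdd : BddBelow S := ⟨0, fun x hx => le_of_not_gt fun h => hsub X hX0 x h hx⟩
    have hne : S.Nonempty := by
      have hu : (⋃ n : ℕ, {ω | X ω ≤ (n:ℝ)}) = univ := eq_univ_of_forall fun ω => by
        obtain ⟨n, hn⟩ := exists_nat_ge (X ω); exact mem_iUnion.2 ⟨n, hn⟩
      have ht : Tendsto (fun n : ℕ => μ {ω | X ω ≤ (n:ℝ)}) atTop (𝓝 1) := by
        have h2 := tendsto_measure_iUnion_atTop (μ := μ) (s := fun n : ℕ => {ω | X ω ≤ (n:ℝ)})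
          (fun m n hmn ω hω => by simp only [mem_setOf] at hω ⊢; exact le_trans hω (by exact_mod_cast hmn))
        rw [hu, measure_univ] at h2; exact h2
      have hlt : ENNReal.ofReal (1 - α) < 1 := by
        rw [← ENNReal.ofReal_one]
        exact ENNReal.ofReal_lt_ofReal_iff one_pos |>.2 (by linarith)
      obtain ⟨n, hn⟩ := (ht.eventually (eventually_gt_nhds hlt)).exists
      exact ⟨n, (ENNReal.ofReal_le_iff_le_toReal (measure_ne_top μ _)).1 hn.le⟩
    set t := sInf S with htdef
    have htS : 1 - α ≤ distFun μ X t := by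
      have hseq : {ω | X ω ≤ t} = ⋂ n : ℕ, {ω | X ω ≤ t + 1/(n+1)} := by
        ext ω; simp only [mem_setOf, mem_iInter]
        constructor
        · intro h n
          have hp : 0 < 1/((n:ℝ)+1) := by positivity
          linarith
        · intro h; by_contra hc; push_neg at hc
          obtain ⟨n, hn⟩ := exists_nat_one_div_lt (sub_pos.2 hc)
          have := h n; linarith
      have hmem : ∀ n : ℕ, ENNReal.ofReal (1 - α) ≤ μ {ω | X ω ≤ t + 1/(n+1)} := by
        intro n
        have hp : 0 < 1/((n:ℝ)+1) := by positivity
        obtain ⟨x, hxS, hxlt⟩ := exists_lt_of_csInf_lt hne (lt_add_of_pos_right t hp)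
        exact (ENNReal.ofReal_le_iff_le_toReal (measure_ne_top μ _)).2 (hup hxS hxlt.le)
      have hti : Tendsto (fun n : ℕ => μ {ω | X ω ≤ t + 1/(n+1)}) atTop (𝓝 (μ {ω | X ω ≤ t})) := by
        rw [hseq]
        refine tendsto_measure_iInter_atTop
          (fun n => (measurableSet_le hXm measurable_const).nullMeasurableSet)
          (fun m n hmn ω hω => ?_) ⟨0, measure_ne_top μ _⟩
        simp only [mem_setOf] at hω ⊢
        refine le_trans hω ?_
        have : 1/((n:ℝ)+1) ≤ 1/((m:ℝ)+1) := by
          apply one_div_le_one_div_of_le (by positivity)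
          have := (Nat.cast_le (α := ℝ)).2 hmn; linarith
        linarith
      have hge := ge_of_tendsto hti (Eventually.of_forall hmem)
      exact (ENNReal.ofReal_le_iff_le_toReal (measure_ne_top μ _)).1 hge
    set S' : Set ℝ := {y : ℝ | 1 - α ≤ distFun μ (fun ω => r (X ω)) y} with hS'
    have hbdd' : BddBelow S' :=
      ⟨0, fun y hy => le_of_not_gt fun h => hsub _ hr0' y h hy⟩
    have hrtS' : 1 - α ≤ distFun μ (fun ω => r (X ω)) (r t) :=
      le_trans htS (ENNReal.toReal_mono (measure_ne_top μ _)
        (measure_mono fun ω hω => hrm hω))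
    apply le_antisymm
    · exact csInf_le hbdd' (by rw [hS']; exact hrtS' : r t ∈ S')
    · have hmemS' : r t ∈ S' := by rw [hS']; exact hrtS'
      refine le_csInf ⟨r t, hmemS'⟩ fun y hy => ?_
      rw [hS'] at hy; simp only [mem_setOf] at hy
      by_contra hc; push_neg at hc
      have hx0 : ∃ x0, x0 < t ∧ y < r x0 := by
        by_contra hno; push_neg at hno
        have hle : r t ≤ y := by
          have h2 : Tendsto r (𝓝[<] t) (𝓝 (r t)) := (hrc.tendsto t).mono_left nhdsWithin_le_nhds
          exact le_of_tendsto h2 (eventually_nhdsWithin_of_forall fun x hx => hno x hx)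
        linarith
      obtain ⟨x0, hx0t, hyx0⟩ := hx0
      have hsubset : {ω | r (X ω) ≤ y} ⊆ {ω | X ω ≤ x0} := fun ω hω => by
        simp only [mem_setOf] at hω ⊢
        by_contra hcc; push_neg at hcc
        exact absurd (le_trans (hrm hcc.le) hω) (not_le.2 hyx0)
      have hF : distFun μ (fun ω => r (X ω)) y ≤ distFun μ X x0 :=
        ENNReal.toReal_mono (measure_ne_top μ _) (measure_mono hsubset)
      have hx0nS : x0 ∉ S := fun hmem => absurd (csInf_le hbdd hmem) (not_le.2 hx0t)
      rw [hS, mem_setOf, not_le] at hx0nS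
      linarith


private lemma VaR_nonneg' {μ : Measure Ω} [IsProbabilityMeasure μ] {X : Ω → ℝ}
    (hX0 : ∀ ω, 0 ≤ X ω) {α : ℝ} (hα : α ∈ Ioc (0:ℝ) 1) : 0 ≤ VaR μ X α := by
  rcases eq_or_lt_of_le hα.2 with h1 | h1
  · subst h1; rw [VaR_one]
  · apply Real.sInf_nonneg
    intro x hx
    by_contra h; push_neg at h
    have he : {ω | X ω ≤ x} = ∅ := eq_empty_iff_forall_notMem.2 fun ω hω => by
      simp only [mem_setOf_eq] at hω; linarith [hX0 ω]
    simp only [mem_setOf_eq, distFun, he, measure_empty, ENNReal.toReal_zero] at hx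
    linarith

private lemma layer_pair {a b v x : ℝ} (hab : a ≤ b) (hbv : b ≤ v) :
    layer b (v - b) x ≤ layer a (v - a) x ∧ layer a (v - a) x - layer b (v - b) x ≤ b - a := by
  unfold layer
  constructor <;> (simp only [min_def, max_def]; split_ifs <;> linarith)

private lemma layer_mem {a v x : ℝ} (h0 : 0 ≤ a) (hav : a ≤ v) (hx : 0 ≤ x) :
    0 ≤ layer a (v - a) x ∧ layer a (v - a) x ≤ v - a :=
  ⟨le_min (le_max_right _ _) (by linarith), min_le_right _ _⟩

private lemma layer_le_ceded {g : ℝ → ℝ} (hg : Ceded g) {v x : ℝ} (hv : 0 ≤ v) (hx : 0 ≤ x) :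
    layer (v - g v) (v - (v - g v)) x ≤ g x := by
  obtain ⟨hm, hr, hb⟩ := hg
  rcases le_total x v with h | h
  · have h2 := hr h
    simp only at h2
    exact le_trans (min_le_left _ _) (max_le (by linarith) (hb x hx).1)
  · refine le_trans (min_le_right _ _) ?_
    have he : v - (v - g v) = g v := by ring
    rw [he]; exact hm h

end AuxLemmas

/-- when all insurers use VaR and π is `≤_st`-consistent and 1-Lipschitz
w.r.t. the sup norm, the objective is componentwise increasing, `(0,…,0)` minimizes it,
and the treaties `fᵢ(x) = min{x, VaR_{αᵢ}(Xᵢ)}` are socially optimal. -/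
theorem full_layer_socially_optimal
    {n : ℕ} (μ : Measure Ω) [IsProbabilityMeasure μ]
    (X : Fin n → Ω → ℝ) (hXm : ∀ i, Measurable (X i))
    (hX0 : ∀ i ω, 0 ≤ X i ω) (hXi : ∀ i, Integrable (X i) μ)
    (α : Fin n → ℝ) (hα : ∀ i, α i ∈ Ioc (0:ℝ) 1)
    (π : (Ω → ℝ) → ℝ)
    (hπst : ∀ W Z : Ω → ℝ, le_st μ W μ Z → π W ≤ π Z)
    (hπlip : ∀ W Z : Ω → ℝ, MemLp W ⊤ μ → MemLp Z ⊤ μ →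
      |π W - π Z| ≤ (eLpNorm (fun ω => W ω - Z ω) ⊤ μ).toReal) :
    MonotoneOn (Qobj μ X α π) {a : Fin n → ℝ | ∀ i, a i ∈ Icc 0 (VaR μ (X i) (α i))} ∧
    (∀ a ∈ {a : Fin n → ℝ | ∀ i, a i ∈ Icc 0 (VaR μ (X i) (α i))},
      Qobj μ X α π 0 ≤ Qobj μ X α π a) ∧
    (∀ g : Fin n → ℝ → ℝ, (∀ i, Ceded (g i)) →
      (∑ i, VaR μ (fun ω => X i ω - min (X i ω) (VaR μ (X i) (α i))) (α i))
          + π (fun ω => ∑ i, min (X i ω) (VaR μ (X i) (α i)))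
        ≤ (∑ i, VaR μ (fun ω => X i ω - g i (X i ω)) (α i))
            + π (fun ω => ∑ i, g i (X i ω))) := by
  classical
  have hv0 : ∀ i, 0 ≤ VaR μ (X i) (α i) := fun i => VaR_nonneg' (hX0 i) (hα i)
  -- measurability and boundedness of the layered sums
  have hW_meas : ∀ a : Fin n → ℝ,
      Measurable (fun ω => ∑ i, layer (a i) (VaR μ (X i) (α i) - a i) (X i ω)) := by
    intro a
    refine Finset.measurable_sum _ fun i _ => ?_
    unfold layer
    exact (((hXm i).sub_const (a i)).max measurable_const).min measurable_const
  have hW_mem : ∀ a : Fin n → ℝ, a ∈ {a : Fin n → ℝ | ∀ i, a i ∈ Icc 0 (VaR μ (X i) (α i))} →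
      MemLp (fun ω => ∑ i, layer (a i) (VaR μ (X i) (α i) - a i) (X i ω)) ⊤ μ := by
    intro a ha
    refine memLp_top_of_bound (hW_meas a).aestronglyMeasurable
      (∑ i, (VaR μ (X i) (α i) - a i)) (Filter.Eventually.of_forall fun ω => ?_)
    rw [Real.norm_eq_abs, abs_le]
    have h1 : ∀ i, 0 ≤ layer (a i) (VaR μ (X i) (α i) - a i) (X i ω) ∧
        layer (a i) (VaR μ (X i) (α i) - a i) (X i ω) ≤ VaR μ (X i) (α i) - a i :=
      fun i => layer_mem (ha i).1 (ha i).2 (hX0 i ω)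
    constructor
    · have h2 : (0:ℝ) ≤ ∑ i, layer (a i) (VaR μ (X i) (α i) - a i) (X i ω) :=
        Finset.sum_nonneg fun i _ => (h1 i).1
      have h3 : (0:ℝ) ≤ ∑ i, (VaR μ (X i) (α i) - a i) :=
        Finset.sum_nonneg fun i _ => by linarith [(ha i).1, (ha i).2]
      linarith
    · exact Finset.sum_le_sum fun i _ => (h1 i).2
  -- monotonicity
  have hmono : MonotoneOn (Qobj μ X α π)
      {a : Fin n → ℝ | ∀ i, a i ∈ Icc 0 (VaR μ (X i) (α i))} := by
    intro a ha b hb hab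
    have hC0 : (0:ℝ) ≤ ∑ i, (b i - a i) := Finset.sum_nonneg fun i _ => by linarith [hab i]
    have key : ∀ ω,
        (∑ i, layer (b i) (VaR μ (X i) (α i) - b i) (X i ω)) ≤
          (∑ i, layer (a i) (VaR μ (X i) (α i) - a i) (X i ω)) ∧
        (∑ i, layer (a i) (VaR μ (X i) (α i) - a i) (X i ω)) -
          (∑ i, layer (b i) (VaR μ (X i) (α i) - b i) (X i ω)) ≤ ∑ i, (b i - a i) := by
      intro ω
      constructor
      · exact Finset.sum_le_sum fun i _ => (layer_pair (hab i) (hb i).2).1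
      · rw [← Finset.sum_sub_distrib]
        exact Finset.sum_le_sum fun i _ => (layer_pair (hab i) (hb i).2).2
    have hlip := hπlip (fun ω => ∑ i, layer (a i) (VaR μ (X i) (α i) - a i) (X i ω))
      (fun ω => ∑ i, layer (b i) (VaR μ (X i) (α i) - b i) (X i ω))
      (hW_mem a ha) (hW_mem b hb)
    beta_reduce at hlip
    have hd : π (fun ω => ∑ i, layer (a i) (VaR μ (X i) (α i) - a i) (X i ω)) -
        π (fun ω => ∑ i, layer (b i) (VaR μ (X i) (α i) - b i) (X i ω)) ≤ ∑ i, (b i - a i) := by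
      refine le_trans (le_trans (le_abs_self _) hlip) ?_
      have h1 : eLpNorm (fun ω => (∑ i, layer (a i) (VaR μ (X i) (α i) - a i) (X i ω)) -
          (∑ i, layer (b i) (VaR μ (X i) (α i) - b i) (X i ω))) ⊤ μ ≤
          ENNReal.ofReal (∑ i, (b i - a i)) := by
        have h2 := eLpNorm_le_of_ae_bound (p := ⊤) (μ := μ)
          (f := fun ω => (∑ i, layer (a i) (VaR μ (X i) (α i) - a i) (X i ω)) -
            (∑ i, layer (b i) (VaR μ (X i) (α i) - b i) (X i ω)))
          (C := ∑ i, (b i - a i)) (Filter.Eventually.of_forall fun ω => by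
            beta_reduce
            rw [Real.norm_eq_abs, abs_le]
            exact ⟨by linarith [(key ω).1], (key ω).2⟩)
        simpa using h2
      refine le_trans (ENNReal.toReal_mono ENNReal.ofReal_ne_top h1) ?_
      rw [ENNReal.toReal_ofReal hC0]
    have hsum : (∑ i, b i) - ∑ i, a i = ∑ i, (b i - a i) := by rw [Finset.sum_sub_distrib]
    unfold Qobj
    linarith
  have h0Box : (0 : Fin n → ℝ) ∈ {a : Fin n → ℝ | ∀ i, a i ∈ Icc 0 (VaR μ (X i) (α i))} :=
    fun i => mem_Icc.2 ⟨le_rfl, hv0 i⟩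
  have hmin : ∀ a ∈ {a : Fin n → ℝ | ∀ i, a i ∈ Icc 0 (VaR μ (X i) (α i))},
      Qobj μ X α π 0 ≤ Qobj μ X α π a :=
    fun a ha => hmono h0Box ha fun i => (ha i).1
  refine ⟨hmono, hmin, ?_⟩
  -- social optimality
  intro g hg
  set a : Fin n → ℝ := fun i => VaR μ (X i) (α i) - g i (VaR μ (X i) (α i)) with hadef
  have hgv : ∀ i, 0 ≤ g i (VaR μ (X i) (α i)) ∧ g i (VaR μ (X i) (α i)) ≤ VaR μ (X i) (α i) :=
    fun i => (hg i).2.2 _ (hv0 i)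
  have haBox : a ∈ {a : Fin n → ℝ | ∀ i, a i ∈ Icc 0 (VaR μ (X i) (α i))} := by
    intro i
    refine mem_Icc.2 ⟨?_, ?_⟩
    · have := (hgv i).2; simp only [hadef]; linarith
    · have := (hgv i).1; simp only [hadef]; linarith
  -- (A) each VaR of the retained loss of the full layer is 0
  have hA : ∀ i, VaR μ (fun ω => X i ω - min (X i ω) (VaR μ (X i) (α i))) (α i) = 0 := by
    intro i
    have hre : (fun ω => X i ω - min (X i ω) (VaR μ (X i) (α i))) =
        (fun ω => max (X i ω - VaR μ (X i) (α i)) 0) := by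
      funext ω
      rcases le_total (X i ω) (VaR μ (X i) (α i)) with h | h
      · rw [min_eq_left h, max_eq_right (by linarith), sub_self]
      · rw [min_eq_right h, max_eq_left (by linarith)]
    have hcomp := VaR_comp (μ := μ) (hXm i) (hX0 i)
      (r := fun x => max (x - VaR μ (X i) (α i)) 0)
      (fun x y hxy => max_le_max (by linarith) le_rfl)
      ((continuous_id.sub continuous_const).max continuous_const)
      (by rw [zero_sub, max_eq_right (by linarith [hv0 i])]) (hα i)
    rw [hre]
    refine hcomp.trans ?_
    simp
  -- (B) VaR of the retained loss under treaty g
  have hB : ∀ i, VaR μ (fun ω => X i ω - g i (X i ω)) (α i) = a i := by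
    intro i
    obtain ⟨hgm, hgr, hgb⟩ := hg i
    have hg00 : g i 0 = 0 := le_antisymm (hgb 0 le_rfl).2 (hgb 0 le_rfl).1
    have hrc : Continuous (fun x => x - g i x) := by
      have hlip : LipschitzWith 1 (fun x => x - g i x) := by
        refine LipschitzWith.of_dist_le_mul fun x y => ?_
        rw [Real.dist_eq, Real.dist_eq, NNReal.coe_one, one_mul]
        rcases le_total x y with h | h
        · have h1 := hgr h; have h2 := hgm h
          simp only at h1
          rw [abs_of_nonpos (by linarith : x - y ≤ 0), abs_le]
          constructor <;> linarith
        · have h1 := hgr h; have h2 := hgm h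
          simp only at h1
          rw [abs_of_nonneg (by linarith : 0 ≤ x - y), abs_le]
          constructor <;> linarith
      exact hlip.continuous
    have hcomp := VaR_comp (μ := μ) (hXm i) (hX0 i) (r := fun x => x - g i x)
      hgr hrc (by simp [hg00]) (hα i)
    exact hcomp
  -- (D) comparison of the premium terms
  have hD : π (fun ω => ∑ i, layer (a i) (VaR μ (X i) (α i) - a i) (X i ω)) ≤
      π (fun ω => ∑ i, g i (X i ω)) := by
    refine hπst _ _ fun f hf hif hig => ?_
    refine integral_mono hif hig fun ω => hf (Finset.sum_le_sum fun i _ => ?_)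
    exact layer_le_ceded (hg i) (hv0 i) (hX0 i ω)
  -- (C) value at 0
  have hC' : Qobj μ X α π 0 = π (fun ω => ∑ i, min (X i ω) (VaR μ (X i) (α i))) := by
    have he : (fun ω => ∑ i, layer 0 (VaR μ (X i) (α i) - 0) (X i ω))
        = (fun ω => ∑ i, min (X i ω) (VaR μ (X i) (α i))) := by
      funext ω
      refine Finset.sum_congr rfl fun i _ => ?_
      simp only [sub_zero, layer]
      rw [max_eq_left (hX0 i ω)]
    simp only [Qobj, Pi.zero_apply, Finset.sum_const_zero, zero_add]
    rw [he]
  have hsumB : (∑ i, a i) = ∑ i, VaR μ (fun ω => X i ω - g i (X i ω)) (α i) :=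
    Finset.sum_congr rfl fun i _ => (hB i).symm
  calc (∑ i, VaR μ (fun ω => X i ω - min (X i ω) (VaR μ (X i) (α i))) (α i))
        + π (fun ω => ∑ i, min (X i ω) (VaR μ (X i) (α i)))
      = Qobj μ X α π 0 := by
        rw [Finset.sum_eq_zero fun i _ => hA i, hC', zero_add]
    _ ≤ Qobj μ X α π a := hmin a haBox
    _ = (∑ i, a i) + π (fun ω => ∑ i, layer (a i) (VaR μ (X i) (α i) - a i) (X i ω)) := rfl
    _ ≤ (∑ i, a i) + π (fun ω => ∑ i, g i (X i ω)) := by linarith [hD]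
    _ = (∑ i, VaR μ (fun ω => X i ω - g i (X i ω)) (α i)) + π (fun ω => ∑ i, g i (X i ω)) := by
        rw [hsumB]
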